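/- Let U be an invertible 2n×2n matrix over a field F with U = [A;B], where A and B are n×2n. Let d₁ be the minimum distance of the linear code generated by A and d₂ the minimum distance of the linear code generated by B. Then for every nonzero row vector p ∈ (F[z])ⁿ of support s, the weight of the codeword p·(A + Bz) ∈ (F[z])^{2n} is at least d₁ + d₂ + s − 1. In particular the free distance of the convolutional code generated by G(z) = A + Bz is at least d₁ + d₂. -/

import Mathlib

section aux
variable {F : Type*} [Field F] [DecidableEq F] {n : ℕ}

lemma stmt14_inj (A B : Matrix (Fin n) (Fin (2 * n)) F)
    (V : Matrix (Fin (2 * n)) (Fin n ⊕ Fin n) F)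
    (hUV : Matrix.fromRows A B * V = 1) (v w : Fin n → F)
    (h : Matrix.vecMul v A + Matrix.vecMul w B = 0) : v = 0 ∧ w = 0 := by
  have hq : Matrix.vecMul (Sum.elim v w) (Matrix.fromRows A B) = 0 := by
    rw [Matrix.sumElim_vecMul_fromRows, h]
  have hz : Sum.elim v w = 0 := by
    calc Sum.elim v w = Matrix.vecMul (Sum.elim v w) (Matrix.fromRows A B * V) := by
          rw [hUV, Matrix.vecMul_one]
      _ = Matrix.vecMul (Matrix.vecMul (Sum.elim v w) (Matrix.fromRows A B)) V := by
          rw [Matrix.vecMul_vecMul]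
      _ = 0 := by rw [hq]; simp
  constructor <;> funext i
  · exact congrFun hz (Sum.inl i)
  · exact congrFun hz (Sum.inr i)

lemma stmt14_span (M : Matrix (Fin n) (Fin (2 * n)) F) (x : Fin n → F) :
    Matrix.vecMul x M ∈ Submodule.span F (Set.range M) := by
  have hx : Matrix.vecMul x M = ∑ i, x i • M i := by
    funext j; simp [Matrix.vecMul, dotProduct, Finset.sum_apply]
  rw [hx]
  exact Submodule.sum_mem _ fun i _ =>
    Submodule.smul_mem _ _ (Submodule.subset_span ⟨i, rfl⟩)

end aux

theorem stmt_14 {F : Type*} [Field F] [DecidableEq F] {n : ℕ}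
    (A B : Matrix (Fin n) (Fin (2 * n)) F)
    (V : Matrix (Fin (2 * n)) (Fin n ⊕ Fin n) F)
    (hUV : Matrix.fromRows A B * V = 1) (hVU : V * Matrix.fromRows A B = 1)
    (d₁ d₂ : ℕ)
    (hd₁ : (∀ c ∈ Submodule.span F (Set.range A), c ≠ 0 → d₁ ≤ hammingNorm c) ∧
      ∃ c ∈ Submodule.span F (Set.range A), c ≠ 0 ∧ hammingNorm c = d₁)
    (hd₂ : (∀ c ∈ Submodule.span F (Set.range B), c ≠ 0 → d₂ ≤ hammingNorm c) ∧
      ∃ c ∈ Submodule.span F (Set.range B), c ≠ 0 ∧ hammingNorm c = d₂) :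
    (∀ p : Fin n → Polynomial F, p ≠ 0 →
      d₁ + d₂ + ((Finset.univ.biUnion fun i => (p i).support).card - 1) ≤
        ∑ j, ((Matrix.vecMul p
          (A.map Polynomial.C +
            (Polynomial.X : Polynomial F) • B.map Polynomial.C)) j).support.card) ∧
    (∀ p : Fin n → Polynomial F, p ≠ 0 →
      d₁ + d₂ ≤
        ∑ j, ((Matrix.vecMul p
          (A.map Polynomial.C +
            (Polynomial.X : Polynomial F) • B.map Polynomial.C)) j).support.card) := by
  have main : ∀ p : Fin n → Polynomial F, p ≠ 0 →
      d₁ + d₂ + ((Finset.univ.biUnion fun i => (p i).support).card - 1) ≤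
        ∑ j, ((Matrix.vecMul p
          (A.map Polynomial.C +
            (Polynomial.X : Polynomial F) • B.map Polynomial.C)) j).support.card := by
    intro p hp
    set c : Fin (2 * n) → Polynomial F := Matrix.vecMul p
      (A.map Polynomial.C + (Polynomial.X : Polynomial F) • B.map Polynomial.C) with hc
    set pk : ℕ → Fin n → F := fun k i => (p i).coeff k with hpk
    set qk : ℕ → Fin n → F := fun k i => if k = 0 then 0 else (p i).coeff (k - 1) with hqk
    set ck : ℕ → Fin (2 * n) → F := fun k j => (c j).coeff k with hck
    -- coefficient formula
    have hcf : ∀ k, ck k = Matrix.vecMul (pk k) A + Matrix.vecMul (qk k) B := by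
      intro k
      funext j
      have hcj : c j = ∑ i, p i * (Polynomial.C (A i j) +
          Polynomial.X * Polynomial.C (B i j)) := by
        simp [hc, Matrix.vecMul, dotProduct, Matrix.map_apply, Matrix.smul_apply,
          smul_eq_mul]
      have : (c j).coeff k = ∑ i, ((p i).coeff k * A i j +
          (p i * (Polynomial.X * Polynomial.C (B i j))).coeff k) := by
        rw [hcj, Polynomial.finset_sum_coeff]
        refine Finset.sum_congr rfl fun i _ => ?_
        rw [mul_add, Polynomial.coeff_add, Polynomial.coeff_mul_C]
      rw [hck] at *
      simp only [this, Pi.add_apply, Matrix.vecMul, dotProduct, Finset.sum_add_distrib]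
      congr 1
      refine Finset.sum_congr rfl fun i _ => ?_
      have hx : p i * (Polynomial.X * Polynomial.C (B i j)) =
          Polynomial.X * (p i * Polynomial.C (B i j)) := by ring
      rw [hx]
      cases k with
      | zero => simp [hqk, Polynomial.mul_coeff_zero]
      | succ m => simp [hqk, Polynomial.coeff_X_mul, Polynomial.coeff_mul_C]
    set K : Finset ℕ := Finset.univ.biUnion fun i => (p i).support with hKdef
    have hKmem : ∀ k, k ∈ K ↔ pk k ≠ 0 := by
      intro k
      simp only [hKdef, Finset.mem_biUnion, Finset.mem_univ, true_and,
        Polynomial.mem_support_iff]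
      constructor
      · rintro ⟨i, hi⟩ h0
        exact hi (congrFun h0 i)
      · intro h
        rcases Function.ne_iff.mp h with ⟨i, hi⟩
        exact ⟨i, hi⟩
    have hKne : K.Nonempty := by
      rcases Function.ne_iff.mp hp with ⟨i, hi⟩
      rcases Polynomial.support_nonempty.mpr hi with ⟨k, hk⟩
      exact ⟨k, by simp only [hKdef, Finset.mem_biUnion, Finset.mem_univ, true_and]; exact ⟨i, hk⟩⟩
    set k₀ := K.min' hKne with hk₀
    set k₁ := K.max' hKne with hk₁
    have hk₀K : k₀ ∈ K := K.min'_mem hKne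
    have hk₁K : k₁ ∈ K := K.max'_mem hKne
    -- all support coefficients are nonzero vectors
    have hmid : ∀ k ∈ K, ck k ≠ 0 := by
      intro k hk h0
      have := (stmt14_inj A B V hUV (pk k) (qk k) (by rw [← hcf k]; exact h0)).1
      exact (hKmem k).mp hk this
    -- q at k₀ is zero
    have hq0 : qk k₀ = 0 := by
      funext i
      by_cases h : k₀ = 0
      · simp [hqk, h]
      · have hlt : k₀ - 1 < k₀ := Nat.sub_lt (Nat.pos_of_ne_zero h) one_pos
        have : k₀ - 1 ∉ K := fun hmem => absurd (K.min'_le _ hmem) (by omega)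
        have hz : pk (k₀ - 1) = 0 := by
          by_contra hne; exact this ((hKmem _).mpr hne)
        simp [hqk, h]
        exact congrFun hz i
    have hck0 : ck k₀ = Matrix.vecMul (pk k₀) A := by
      rw [hcf k₀, hq0]; simp
    have hd1b : d₁ ≤ hammingNorm (ck k₀) := by
      refine hd₁.1 _ ?_ (hmid _ hk₀K)
      rw [hck0]; exact stmt14_span A (pk k₀)
    -- top coefficient
    have hp1 : pk (k₁ + 1) = 0 := by
      by_contra hne
      have := (hKmem _).mpr hne
      have := K.le_max' _ this
      omega
    have hq1 : qk (k₁ + 1) = pk k₁ := by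
      funext i; simp [hqk, hpk]
    have hck1 : ck (k₁ + 1) = Matrix.vecMul (pk k₁) B := by
      rw [hcf, hp1, hq1]; simp
    have htop : ck (k₁ + 1) ≠ 0 := by
      intro h0
      have := (stmt14_inj A B V hUV 0 (pk k₁)
        (by rw [← hck1] at *; simpa using h0)).2
      exact (hKmem k₁).mp hk₁K this
    have hd2b : d₂ ≤ hammingNorm (ck (k₁ + 1)) := by
      refine hd₂.1 _ ?_ htop
      rw [hck1]; exact stmt14_span B (pk k₁)
    -- weight identity
    set T : Finset ℕ := Finset.univ.biUnion fun j => (c j).support with hT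
    have hsuppT : ∀ j, (c j).support ⊆ T := by
      intro j k hk
      simp only [hT, Finset.mem_biUnion, Finset.mem_univ, true_and]
      exact ⟨j, hk⟩
    have hwt : ∑ j, (c j).support.card = ∑ k ∈ T, hammingNorm (ck k) := by
      have h1 : ∀ j, (c j).support.card =
          ∑ k ∈ T, if (c j).coeff k ≠ 0 then 1 else 0 := by
        intro j
        rw [← Finset.card_filter]
        congr 1
        ext k
        simp only [Finset.mem_filter, Polynomial.mem_support_iff]
        exact ⟨fun hk => ⟨hsuppT j (Polynomial.mem_support_iff.mpr hk), hk⟩, fun h => h.2⟩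
      simp only [h1]
      rw [Finset.sum_comm]
      refine Finset.sum_congr rfl fun k _ => ?_
      rw [hammingNorm, ← Finset.card_filter]
    -- nonzero coefficients live in T
    have hsubT : insert (k₁ + 1) K ⊆ T := by
      intro k hk
      have hckk : ck k ≠ 0 := by
        rcases Finset.mem_insert.mp hk with h | h
        · rw [h]; exact htop
        · exact hmid k h
      rcases Function.ne_iff.mp hckk with ⟨j, hj⟩
      exact hsuppT j (Polynomial.mem_support_iff.mpr hj)
    have hnotin : k₁ + 1 ∉ K := fun h => by have := K.le_max' _ h; omega
    have hKsplit : K = insert k₀ (K.erase k₀) := (Finset.insert_erase hk₀K).symm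
    have hstep : ∑ k ∈ T, hammingNorm (ck k) ≥
        hammingNorm (ck (k₁ + 1)) + (hammingNorm (ck k₀) +
          ∑ k ∈ K.erase k₀, hammingNorm (ck k)) := by
      calc ∑ k ∈ T, hammingNorm (ck k)
          ≥ ∑ k ∈ insert (k₁ + 1) K, hammingNorm (ck k) :=
            Finset.sum_le_sum_of_subset hsubT
        _ = hammingNorm (ck (k₁ + 1)) + ∑ k ∈ K, hammingNorm (ck k) :=
            Finset.sum_insert hnotin
        _ = hammingNorm (ck (k₁ + 1)) + (hammingNorm (ck k₀) +
              ∑ k ∈ K.erase k₀, hammingNorm (ck k)) := by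
            rw [hKsplit, Finset.sum_insert (Finset.notMem_erase _ _)]
            rw [← hKsplit]
    have herase : (K.erase k₀).card ≤ ∑ k ∈ K.erase k₀, hammingNorm (ck k) := by
      calc (K.erase k₀).card = ∑ _k ∈ K.erase k₀, 1 := by simp
        _ ≤ ∑ k ∈ K.erase k₀, hammingNorm (ck k) := by
            refine Finset.sum_le_sum fun k hk => ?_
            exact Nat.one_le_iff_ne_zero.mpr
              (hammingNorm_ne_zero_iff.mpr (hmid k (Finset.mem_of_mem_erase hk)))
    have hcard : (K.erase k₀).card = K.card - 1 := Finset.card_erase_of_mem hk₀K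
    have hfin : d₁ + d₂ + (K.card - 1) ≤ ∑ k ∈ T, hammingNorm (ck k) := by
      have := hstep
      omega
    rw [hwt]
    exact hfin
  exact ⟨main, fun p hp => le_trans (Nat.le_add_right _ _) (main p hp)⟩
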